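/- Let V be a finite type, c : V → V → ℝ≥0 a capacity function, S ⊆ V a subset, P ≥ 1 an integer, and let s ∈ S and t ∉ S with s ≠ t. Let c_P be the P-fold replication of S, and let G'' be the weighted directed graph on the vertex type {v : V // v ∉ S} ⊕ S ⊕ S (a first, unreplicated copy of S and a second, reweighted copy of S) with capacities: c u v between u, v ∉ S; c u v from u ∉ S to the first copy of v ∈ S and c v u back; c u v between first-copy vertices u, v ∈ S; (P−1) · c u v from u ∉ S to the second copy of v ∈ S and (P−1) · c v u back; (P−1) · c u v between second-copy vertices u, v ∈ S; and capacity 0 between the two copies of S. Then the maximum flow value from the copy (s,0) of s to the unique copy of t in c_P equals the maximum flow value from the first-copy vertex s to t in G''. -/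

import Mathlib

/-!
STATEMENT 2: For `s ∈ S`, `t ∉ S`, the maximum flow value from the copy `(s,0)` to
the unique copy of `t` in the P-fold replication of `S` equals the maximum flow value
from the first-copy vertex `s` to `t` in the graph `G''` with one unreplicated copy of
`S` and one `(P-1)`-reweighted copy of `S`.
-/

open Finset

attribute [local instance] Classical.propDecidable

noncomputable section

/-- `f` is an `s`-`t` flow for the capacity function `c`. -/
def IsFlow {W : Type*} [Fintype W] (c : W → W → NNReal) (s t : W) (f : W → W → ℝ) : Prop :=
  (∀ u v, 0 ≤ f u v ∧ f u v ≤ (c u v : ℝ)) ∧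
  ∀ v, v ≠ s → v ≠ t → (∑ u, f u v) = (∑ w, f v w)

/-- The value of a flow `f` with source `s`. -/
def flowValue {W : Type*} [Fintype W] (f : W → W → ℝ) (s : W) : ℝ :=
  (∑ w, f s w) - (∑ u, f u s)

/-- The maximum `s`-`t` flow value (the greatest value attained by an `s`-`t` flow). -/
def maxFlowValue {W : Type*} [Fintype W] (c : W → W → NNReal) (s t : W) : ℝ :=
  sSup {μ : ℝ | ∃ f, IsFlow c s t f ∧ flowValue f s = μ}

/-- The capacity function of the `P`-fold replication of the subset `S`. -/
def repCap {V : Type*} (c : V → V → NNReal) (S : Set V) (P : ℕ) :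
    ({v : V // v ∉ S} ⊕ (↥S × Fin P)) → ({v : V // v ∉ S} ⊕ (↥S × Fin P)) → NNReal
  | Sum.inl u, Sum.inl v => c u.1 v.1
  | Sum.inl u, Sum.inr (v, _) => c u.1 v.1
  | Sum.inr (v, _), Sum.inl u => c v.1 u.1
  | Sum.inr (u, i), Sum.inr (v, j) => if i = j then c u.1 v.1 else 0

/-- The capacity function of the graph `G''` on `{v // v ∉ S} ⊕ (S ⊕ S)`, where the
first copy of `S` is unreplicated and the second copy is `(P-1)`-reweighted, and the
two copies are not connected to each other. -/
def twoCopyCap {V : Type*} (c : V → V → NNReal) (S : Set V) (P : ℕ) :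
    ({v : V // v ∉ S} ⊕ (↥S ⊕ ↥S)) → ({v : V // v ∉ S} ⊕ (↥S ⊕ ↥S)) → NNReal
  | Sum.inl u, Sum.inl v => c u.1 v.1
  | Sum.inl u, Sum.inr (Sum.inl v) => c u.1 v.1
  | Sum.inr (Sum.inl v), Sum.inl u => c v.1 u.1
  | Sum.inr (Sum.inl u), Sum.inr (Sum.inl v) => c u.1 v.1
  | Sum.inl u, Sum.inr (Sum.inr v) => ((P - 1 : ℕ) : NNReal) * c u.1 v.1
  | Sum.inr (Sum.inr v), Sum.inl u => ((P - 1 : ℕ) : NNReal) * c v.1 u.1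
  | Sum.inr (Sum.inr u), Sum.inr (Sum.inr v) => ((P - 1 : ℕ) : NNReal) * c u.1 v.1
  | Sum.inr (Sum.inl _), Sum.inr (Sum.inr _) => 0
  | Sum.inr (Sum.inr _), Sum.inr (Sum.inl _) => 0


namespace RepTwoCopyAux

variable {V : Type*} [Fintype V]

/-- Map a flow on the `P`-fold replication to a flow on the two-copy graph. -/
def toTwo (S : Set V) (P : ℕ) (hP : 0 < P)
    (f : ({v : V // v ∉ S} ⊕ (↥S × Fin P)) → ({v : V // v ∉ S} ⊕ (↥S × Fin P)) → ℝ) :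
    ({v : V // v ∉ S} ⊕ (↥S ⊕ ↥S)) → ({v : V // v ∉ S} ⊕ (↥S ⊕ ↥S)) → ℝ
  | Sum.inl u, Sum.inl v => f (Sum.inl u) (Sum.inl v)
  | Sum.inl u, Sum.inr (Sum.inl v) => f (Sum.inl u) (Sum.inr (v, ⟨0, hP⟩))
  | Sum.inr (Sum.inl v), Sum.inl u => f (Sum.inr (v, ⟨0, hP⟩)) (Sum.inl u)
  | Sum.inr (Sum.inl u), Sum.inr (Sum.inl v) =>
      f (Sum.inr (u, ⟨0, hP⟩)) (Sum.inr (v, ⟨0, hP⟩))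
  | Sum.inl u, Sum.inr (Sum.inr v) =>
      ∑ i ∈ Finset.univ.erase (⟨0, hP⟩ : Fin P), f (Sum.inl u) (Sum.inr (v, i))
  | Sum.inr (Sum.inr v), Sum.inl u =>
      ∑ i ∈ Finset.univ.erase (⟨0, hP⟩ : Fin P), f (Sum.inr (v, i)) (Sum.inl u)
  | Sum.inr (Sum.inr u), Sum.inr (Sum.inr v) =>
      ∑ i ∈ Finset.univ.erase (⟨0, hP⟩ : Fin P), f (Sum.inr (u, i)) (Sum.inr (v, i))
  | Sum.inr (Sum.inl _), Sum.inr (Sum.inr _) => 0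
  | Sum.inr (Sum.inr _), Sum.inr (Sum.inl _) => 0

/-- Map a flow on the two-copy graph back to a flow on the `P`-fold replication. -/
def toRep (S : Set V) (P : ℕ) (hP : 0 < P)
    (g : ({v : V // v ∉ S} ⊕ (↥S ⊕ ↥S)) → ({v : V // v ∉ S} ⊕ (↥S ⊕ ↥S)) → ℝ) :
    ({v : V // v ∉ S} ⊕ (↥S × Fin P)) → ({v : V // v ∉ S} ⊕ (↥S × Fin P)) → ℝ
  | Sum.inl u, Sum.inl v => g (Sum.inl u) (Sum.inl v)
  | Sum.inl u, Sum.inr (v, i) =>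
      if i = ⟨0, hP⟩ then g (Sum.inl u) (Sum.inr (Sum.inl v))
      else g (Sum.inl u) (Sum.inr (Sum.inr v)) / ((P - 1 : ℕ) : ℝ)
  | Sum.inr (v, i), Sum.inl u =>
      if i = ⟨0, hP⟩ then g (Sum.inr (Sum.inl v)) (Sum.inl u)
      else g (Sum.inr (Sum.inr v)) (Sum.inl u) / ((P - 1 : ℕ) : ℝ)
  | Sum.inr (u, i), Sum.inr (v, j) =>
      if i = j then
        (if i = ⟨0, hP⟩ then g (Sum.inr (Sum.inl u)) (Sum.inr (Sum.inl v))
         else g (Sum.inr (Sum.inr u)) (Sum.inr (Sum.inr v)) / ((P - 1 : ℕ) : ℝ))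
      else 0

theorem toTwo_spec (c : V → V → NNReal) (S : Set V) (P : ℕ) (hP : 0 < P)
    (s t : V) (hsS : s ∈ S) (ht : t ∉ S)
    (f : ({v : V // v ∉ S} ⊕ (↥S × Fin P)) → ({v : V // v ∉ S} ⊕ (↥S × Fin P)) → ℝ)
    (hf : IsFlow (repCap c S P) (Sum.inr (⟨s, hsS⟩, ⟨0, hP⟩)) (Sum.inl ⟨t, ht⟩) f) :
    IsFlow (twoCopyCap c S P) (Sum.inr (Sum.inl ⟨s, hsS⟩)) (Sum.inl ⟨t, ht⟩)
      (toTwo S P hP f) ∧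
    flowValue (toTwo S P hP f) (Sum.inr (Sum.inl ⟨s, hsS⟩)) =
      flowValue f (Sum.inr (⟨s, hsS⟩, ⟨0, hP⟩)) := by
  classical
  obtain ⟨hbd, hcons⟩ := hf
  set i0 : Fin P := ⟨0, hP⟩ with hi0
  -- cross-copy flows in the replication vanish
  have hzero : ∀ (a b : ↥S) (i j : Fin P), i ≠ j →
      f (Sum.inr (a, i)) (Sum.inr (b, j)) = 0 := by
    intro a b i j hij
    have h1 := (hbd (Sum.inr (a, i)) (Sum.inr (b, j))).1
    have h2 := (hbd (Sum.inr (a, i)) (Sum.inr (b, j))).2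
    simp only [repCap, if_neg hij, NNReal.coe_zero] at h2
    linarith
  have hsplit : ∀ (h : Fin P → ℝ),
      ∑ i, h i = h i0 + ∑ i ∈ Finset.univ.erase i0, h i :=
    fun h => (Finset.add_sum_erase _ h (Finset.mem_univ i0)).symm
  have hcard : (Finset.univ.erase i0).card = P - 1 := by
    rw [Finset.card_erase_of_mem (Finset.mem_univ _), Finset.card_univ, Fintype.card_fin]
  have hcapsum : ∀ (x y : NNReal) (h : Fin P → ℝ), (∀ i, h i ≤ (x : ℝ)) →
      ∑ i ∈ Finset.univ.erase i0, h i ≤ ((((P - 1 : ℕ) : NNReal) * x : NNReal) : ℝ) := by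
    intro x y h hh
    calc ∑ i ∈ Finset.univ.erase i0, h i ≤ ∑ _i ∈ Finset.univ.erase i0, (x : ℝ) :=
          Finset.sum_le_sum fun i _ => hh i
      _ = ((P - 1 : ℕ) : ℝ) * (x : ℝ) := by rw [Finset.sum_const, hcard, nsmul_eq_mul]
      _ = _ := by rw [NNReal.coe_mul, NNReal.coe_natCast]
  refine ⟨⟨?_, ?_⟩, ?_⟩
  · -- capacity bounds
    rintro (u | u | u) (v | v | v)
    · refine ⟨(hbd (Sum.inl u) (Sum.inl v)).1, ?_⟩
      simpa [toTwo, twoCopyCap, repCap] using (hbd (Sum.inl u) (Sum.inl v)).2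
    · refine ⟨(hbd (Sum.inl u) (Sum.inr (v, i0))).1, ?_⟩
      simpa [toTwo, twoCopyCap, repCap] using (hbd (Sum.inl u) (Sum.inr (v, i0))).2
    · refine ⟨Finset.sum_nonneg fun i _ => (hbd _ _).1, ?_⟩
      exact hcapsum (c u.1 v.1) 0 _ (fun i => by
        simpa [repCap] using (hbd (Sum.inl u) (Sum.inr (v, i))).2)
    · refine ⟨(hbd (Sum.inr (u, i0)) (Sum.inl v)).1, ?_⟩
      simpa [toTwo, twoCopyCap, repCap] using (hbd (Sum.inr (u, i0)) (Sum.inl v)).2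
    · refine ⟨(hbd (Sum.inr (u, i0)) (Sum.inr (v, i0))).1, ?_⟩
      simpa [toTwo, twoCopyCap, repCap] using (hbd (Sum.inr (u, i0)) (Sum.inr (v, i0))).2
    · exact ⟨le_refl 0, NNReal.coe_nonneg _⟩
    · refine ⟨Finset.sum_nonneg fun i _ => (hbd _ _).1, ?_⟩
      exact hcapsum (c u.1 v.1) 0 _ (fun i => by
        simpa [repCap] using (hbd (Sum.inr (u, i)) (Sum.inl v)).2)
    · exact ⟨le_refl 0, NNReal.coe_nonneg _⟩
    · refine ⟨Finset.sum_nonneg fun i _ => (hbd _ _).1, ?_⟩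
      exact hcapsum (c u.1 v.1) 0 _ (fun i => by
        simpa [repCap] using (hbd (Sum.inr (u, i)) (Sum.inr (v, i))).2)
  · -- conservation
    rintro (v | v | v) hxs hxt
    · -- outside S
      have hv : v ≠ ⟨t, ht⟩ := fun h => hxt (by rw [h])
      have hc := hcons (Sum.inl v) (by simp) (by simp [hv])
      simp only [Fintype.sum_sum_type, Fintype.sum_prod_type] at hc
      simp only [hsplit] at hc
      simp only [Finset.sum_add_distrib] at hc
      simp only [Fintype.sum_sum_type, toTwo]
      simp only [← hi0] at hc ⊢
      linarith
    · -- first copy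
      have hv : v ≠ ⟨s, hsS⟩ := fun h => hxs (by rw [h])
      have hne : (Sum.inr (v, i0) : {v : V // v ∉ S} ⊕ (↥S × Fin P)) ≠
          Sum.inr (⟨s, hsS⟩, i0) := by simp [hv]
      have hc := hcons (Sum.inr (v, i0)) hne (by simp)
      simp only [Fintype.sum_sum_type, Fintype.sum_prod_type] at hc
      simp only [hsplit] at hc
      have hz1 : ∀ a : ↥S, ∑ i ∈ Finset.univ.erase i0, f (Sum.inr (a, i)) (Sum.inr (v, i0)) = 0 :=
        fun a => Finset.sum_eq_zero fun i hi => hzero a v i i0 (Finset.ne_of_mem_erase hi)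
      have hz2 : ∀ a : ↥S, ∑ i ∈ Finset.univ.erase i0, f (Sum.inr (v, i0)) (Sum.inr (a, i)) = 0 :=
        fun a => Finset.sum_eq_zero fun i hi => hzero v a i0 i (Finset.ne_of_mem_erase hi).symm
      simp only [hz1, hz2, add_zero] at hc
      simp only [Fintype.sum_sum_type, toTwo, Finset.sum_const_zero, add_zero, zero_add]
      simp only [← hi0] at hc ⊢
      linarith
    · -- second copy
      have key : ∀ i ∈ Finset.univ.erase i0,
          ((∑ u : {v : V // v ∉ S}, f (Sum.inl u) (Sum.inr (v, i))) +
            ∑ a : ↥S, f (Sum.inr (a, i)) (Sum.inr (v, i))) =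
          ((∑ u : {v : V // v ∉ S}, f (Sum.inr (v, i)) (Sum.inl u)) +
            ∑ a : ↥S, f (Sum.inr (v, i)) (Sum.inr (a, i))) := by
        intro i hi
        have hii0 : i ≠ i0 := Finset.ne_of_mem_erase hi
        have hne : (Sum.inr (v, i) : {v : V // v ∉ S} ⊕ (↥S × Fin P)) ≠
            Sum.inr (⟨s, hsS⟩, i0) := by simp [Prod.ext_iff]; intro _; exact hii0
        have hc := hcons (Sum.inr (v, i)) hne (by simp)
        simp only [Fintype.sum_sum_type, Fintype.sum_prod_type] at hc
        have e1 : ∀ a : ↥S, (∑ j, f (Sum.inr (a, j)) (Sum.inr (v, i))) =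
            f (Sum.inr (a, i)) (Sum.inr (v, i)) :=
          fun a => Fintype.sum_eq_single i (fun j hj => hzero a v j i hj)
        have e2 : ∀ a : ↥S, (∑ j, f (Sum.inr (v, i)) (Sum.inr (a, j))) =
            f (Sum.inr (v, i)) (Sum.inr (a, i)) :=
          fun a => Fintype.sum_eq_single i (fun j hj => hzero v a i j (Ne.symm hj))
        simp only [e1, e2] at hc
        exact hc
      have c1 := Finset.sum_comm (s := (Finset.univ : Finset {v : V // v ∉ S}))
        (t := Finset.univ.erase i0) (f := fun u i => f (Sum.inl u) (Sum.inr (v, i)))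
      have c2 := Finset.sum_comm (s := (Finset.univ : Finset ↥S))
        (t := Finset.univ.erase i0) (f := fun a i => f (Sum.inr (a, i)) (Sum.inr (v, i)))
      have c3 := Finset.sum_comm (s := (Finset.univ : Finset {v : V // v ∉ S}))
        (t := Finset.univ.erase i0) (f := fun u i => f (Sum.inr (v, i)) (Sum.inl u))
      have c4 := Finset.sum_comm (s := (Finset.univ : Finset ↥S))
        (t := Finset.univ.erase i0) (f := fun a i => f (Sum.inr (v, i)) (Sum.inr (a, i)))
      have key2 := Finset.sum_congr rfl key
      rw [Finset.sum_add_distrib, Finset.sum_add_distrib] at key2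
      simp only [Fintype.sum_sum_type, toTwo, Finset.sum_const_zero, add_zero, zero_add]
      simp only [← hi0]
      rw [c1, c2, c3, c4]
      exact key2
  · -- value
    have hz1 : ∀ a : ↥S, ∑ i ∈ Finset.univ.erase i0,
        f (Sum.inr (a, i)) (Sum.inr ((⟨s, hsS⟩ : ↥S), i0)) = 0 :=
      fun a => Finset.sum_eq_zero fun i hi => hzero a _ i i0 (Finset.ne_of_mem_erase hi)
    have hz2 : ∀ a : ↥S, ∑ i ∈ Finset.univ.erase i0,
        f (Sum.inr ((⟨s, hsS⟩ : ↥S), i0)) (Sum.inr (a, i)) = 0 :=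
      fun a => Finset.sum_eq_zero fun i hi => hzero _ a i0 i (Finset.ne_of_mem_erase hi).symm
    simp only [flowValue, Fintype.sum_sum_type, Fintype.sum_prod_type, toTwo,
      Finset.sum_const_zero, add_zero, zero_add]
    simp only [← hi0]
    simp only [hsplit]
    simp only [Finset.sum_add_distrib]
    simp only [hz1, hz2, Finset.sum_const_zero, add_zero]

theorem toRep_spec (c : V → V → NNReal) (S : Set V) (P : ℕ) (hP : 0 < P)
    (s t : V) (hsS : s ∈ S) (ht : t ∉ S)
    (g : ({v : V // v ∉ S} ⊕ (↥S ⊕ ↥S)) → ({v : V // v ∉ S} ⊕ (↥S ⊕ ↥S)) → ℝ)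
    (hg : IsFlow (twoCopyCap c S P) (Sum.inr (Sum.inl ⟨s, hsS⟩)) (Sum.inl ⟨t, ht⟩) g) :
    IsFlow (repCap c S P) (Sum.inr (⟨s, hsS⟩, ⟨0, hP⟩)) (Sum.inl ⟨t, ht⟩)
      (toRep S P hP g) ∧
    flowValue (toRep S P hP g) (Sum.inr (⟨s, hsS⟩, ⟨0, hP⟩)) =
      flowValue g (Sum.inr (Sum.inl ⟨s, hsS⟩)) := by
  classical
  obtain ⟨hbd, hcons⟩ := hg
  set i0 : Fin P := ⟨0, hP⟩ with hi0
  have hcap0 : ∀ x y, ((twoCopyCap c S P x y : NNReal) : ℝ) = 0 → g x y = 0 :=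
    fun x y h => le_antisymm (h ▸ (hbd x y).2) (hbd x y).1
  have hz1 : ∀ (a b : ↥S), g (Sum.inr (Sum.inl a)) (Sum.inr (Sum.inr b)) = 0 :=
    fun a b => hcap0 _ _ (by simp [twoCopyCap])
  have hz2 : ∀ (a b : ↥S), g (Sum.inr (Sum.inr a)) (Sum.inr (Sum.inl b)) = 0 :=
    fun a b => hcap0 _ _ (by simp [twoCopyCap])
  have hcard : (Finset.univ.erase i0).card = P - 1 := by
    rw [Finset.card_erase_of_mem (Finset.mem_univ _), Finset.card_univ, Fintype.card_fin]
  have hsplit : ∀ (h : Fin P → ℝ),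
      ∑ i, h i = h i0 + ∑ i ∈ Finset.univ.erase i0, h i :=
    fun h => (Finset.add_sum_erase _ h (Finset.mem_univ i0)).symm
  have hgtwo : ∀ i : Fin P, i ≠ i0 → 2 ≤ P := by
    intro i hi
    by_contra h
    have h1 : P = 1 := by omega
    exact hi (Fin.ext (by have := i.isLt; omega))
  have hdiv : ∀ x : ℝ, (P = 1 → x = 0) →
      ∑ _i ∈ Finset.univ.erase i0, x / ((P - 1 : ℕ) : ℝ) = x := by
    intro x hx
    rw [Finset.sum_const, hcard, nsmul_eq_mul]
    by_cases h1 : P = 1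
    · simp [h1, hx h1]
    · have hne : ((P - 1 : ℕ) : ℝ) ≠ 0 := Nat.cast_ne_zero.mpr (by omega)
      rw [mul_comm, div_mul_cancel₀ x hne]
  have e0 : ∀ (h h' : Fin P → ℝ),
      ∑ i ∈ Finset.univ.erase i0, (if i = i0 then h i else h' i) =
      ∑ i ∈ Finset.univ.erase i0, h' i :=
    fun h h' => Finset.sum_congr rfl fun i hi => if_neg (Finset.ne_of_mem_erase hi)
  have e0' : ∀ (h h' : Fin P → ℝ),
      ∑ i ∈ Finset.univ.erase i0, (if i0 = i then h i else h' i) =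
      ∑ i ∈ Finset.univ.erase i0, h' i :=
    fun h h' => Finset.sum_congr rfl fun i hi => if_neg (Finset.ne_of_mem_erase hi).symm
  refine ⟨⟨?_, ?_⟩, ?_⟩
  · -- capacity bounds
    rintro (u | ⟨u, i⟩) (v | ⟨v, j⟩)
    · refine ⟨(hbd (Sum.inl u) (Sum.inl v)).1, ?_⟩
      simpa [toRep, repCap, twoCopyCap] using (hbd (Sum.inl u) (Sum.inl v)).2
    · by_cases hj : j = i0
      · refine ⟨by simp only [toRep, ← hi0, if_pos hj]; exact (hbd _ _).1, ?_⟩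
        simp only [toRep, ← hi0, if_pos hj, repCap]
        simpa [twoCopyCap] using (hbd (Sum.inl u) (Sum.inr (Sum.inl v))).2
      · have h2 : 2 ≤ P := hgtwo j hj
        have hpos : (0 : ℝ) < ((P - 1 : ℕ) : ℝ) := by
          have : 0 < P - 1 := by omega
          exact_mod_cast this
        simp only [toRep, ← hi0, if_neg hj, repCap]
        refine ⟨div_nonneg (hbd _ _).1 hpos.le, ?_⟩
        rw [div_le_iff₀ hpos, mul_comm]
        have hb := (hbd (Sum.inl u) (Sum.inr (Sum.inr v))).2
        simp only [twoCopyCap, NNReal.coe_mul, NNReal.coe_natCast] at hb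
        exact hb
    · by_cases hi : i = i0
      · refine ⟨by simp only [toRep, ← hi0, if_pos hi]; exact (hbd _ _).1, ?_⟩
        simp only [toRep, ← hi0, if_pos hi, repCap]
        simpa [twoCopyCap] using (hbd (Sum.inr (Sum.inl u)) (Sum.inl v)).2
      · have h2 : 2 ≤ P := hgtwo i hi
        have hpos : (0 : ℝ) < ((P - 1 : ℕ) : ℝ) := by
          have : 0 < P - 1 := by omega
          exact_mod_cast this
        simp only [toRep, ← hi0, if_neg hi, repCap]
        refine ⟨div_nonneg (hbd _ _).1 hpos.le, ?_⟩
        rw [div_le_iff₀ hpos, mul_comm]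
        have hb := (hbd (Sum.inr (Sum.inr u)) (Sum.inl v)).2
        simp only [twoCopyCap, NNReal.coe_mul, NNReal.coe_natCast] at hb
        exact hb
    · by_cases hij : i = j
      · subst hij
        by_cases hi : i = i0
        · refine ⟨by simp only [toRep, ← hi0, if_pos rfl, if_pos hi, eq_self_iff_true, if_true]; exact (hbd _ _).1, ?_⟩
          simp only [toRep, ← hi0, if_pos rfl, if_pos hi, repCap, eq_self_iff_true, if_true]
          simpa [twoCopyCap] using
            (hbd (Sum.inr (Sum.inl u)) (Sum.inr (Sum.inl v))).2
        · have h2 : 2 ≤ P := hgtwo i hi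
          have hpos : (0 : ℝ) < ((P - 1 : ℕ) : ℝ) := by
            have : 0 < P - 1 := by omega
            exact_mod_cast this
          simp only [toRep, ← hi0, if_pos rfl, if_neg hi, repCap, eq_self_iff_true, if_true]
          refine ⟨div_nonneg (hbd _ _).1 hpos.le, ?_⟩
          rw [div_le_iff₀ hpos, mul_comm]
          have hb := (hbd (Sum.inr (Sum.inr u)) (Sum.inr (Sum.inr v))).2
          simp only [twoCopyCap, NNReal.coe_mul, NNReal.coe_natCast] at hb
          exact hb
      · simp [toRep, repCap, hij]
  · -- conservation
    rintro (v | ⟨v, i⟩) hxs hxt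
    · -- outside S
      have hv : v ≠ ⟨t, ht⟩ := fun h => hxt (by rw [h])
      have hc := hcons (Sum.inl v) (by simp) (by simp [hv])
      simp only [Fintype.sum_sum_type] at hc
      have E1 : (∑ a : ↥S, ∑ _i ∈ Finset.univ.erase i0,
          g (Sum.inr (Sum.inr a)) (Sum.inl v) / ((P - 1 : ℕ) : ℝ)) =
          ∑ a : ↥S, g (Sum.inr (Sum.inr a)) (Sum.inl v) :=
        Finset.sum_congr rfl fun a _ => hdiv _
          (fun h1 => hcap0 _ _ (by subst h1; simp [twoCopyCap]))
      have E2 : (∑ a : ↥S, ∑ _i ∈ Finset.univ.erase i0,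
          g (Sum.inl v) (Sum.inr (Sum.inr a)) / ((P - 1 : ℕ) : ℝ)) =
          ∑ a : ↥S, g (Sum.inl v) (Sum.inr (Sum.inr a)) :=
        Finset.sum_congr rfl fun a _ => hdiv _
          (fun h1 => hcap0 _ _ (by subst h1; simp [twoCopyCap]))
      simp only [Fintype.sum_sum_type, Fintype.sum_prod_type, toRep, ← hi0]
      simp only [hsplit, eq_self_iff_true, if_true, e0, e0']
      simp only [Finset.sum_add_distrib]
      rw [E1, E2]
      linarith
    · -- inside S
      by_cases hi : i = i0
      · subst hi
        have hv : v ≠ ⟨s, hsS⟩ := by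
          intro h; apply hxs; rw [h]
        have hc := hcons (Sum.inr (Sum.inl v)) (by simp [hv]) (by simp)
        simp only [Fintype.sum_sum_type, hz1, hz2, Finset.sum_const_zero,
          add_zero] at hc
        simp only [Fintype.sum_sum_type, Fintype.sum_prod_type, toRep, ← hi0]
        simp only [hsplit, eq_self_iff_true, if_true, e0, e0']
        simp only [Finset.sum_const_zero, add_zero]
        linarith
      · have h2 : 2 ≤ P := hgtwo i hi
        have hne0 : ((P - 1 : ℕ) : ℝ) ≠ 0 := Nat.cast_ne_zero.mpr (by omega)
        have hc := hcons (Sum.inr (Sum.inr v)) (by simp) (by simp)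
        simp only [Fintype.sum_sum_type, hz1, hz2, Finset.sum_const_zero,
          add_zero, zero_add] at hc
        have e1 : ∀ a : ↥S, (∑ j : Fin P, toRep S P hP g (Sum.inr (a, j)) (Sum.inr (v, i))) =
            g (Sum.inr (Sum.inr a)) (Sum.inr (Sum.inr v)) / ((P - 1 : ℕ) : ℝ) := by
          intro a
          rw [Fintype.sum_eq_single i (fun j hj => by simp [toRep, hj])]
          simp [toRep, ← hi0, hi]
        have e2 : ∀ a : ↥S, (∑ j : Fin P, toRep S P hP g (Sum.inr (v, i)) (Sum.inr (a, j))) =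
            g (Sum.inr (Sum.inr v)) (Sum.inr (Sum.inr a)) / ((P - 1 : ℕ) : ℝ) := by
          intro a
          rw [Fintype.sum_eq_single i (fun j hj => by simp [toRep, Ne.symm hj])]
          simp [toRep, ← hi0, hi]
        simp only [Fintype.sum_sum_type, Fintype.sum_prod_type]
        simp only [e1, e2]
        simp only [toRep, ← hi0, if_neg hi]
        rw [← Finset.sum_div, ← Finset.sum_div, ← Finset.sum_div, ← Finset.sum_div,
          ← add_div, ← add_div, hc]
  · -- value
    simp only [flowValue, Fintype.sum_sum_type, Fintype.sum_prod_type, toRep, ← hi0,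
      hz1, hz2, Finset.sum_const_zero, add_zero]
    simp only [hsplit, eq_self_iff_true, if_true, e0, e0']
    simp only [Finset.sum_const_zero, add_zero]

end RepTwoCopyAux

theorem maxFlow_repCap_eq_maxFlow_twoCopy {V : Type*} [Fintype V]
    (c : V → V → NNReal) (S : Set V) (P : ℕ) (hP : 1 ≤ P)
    (s t : V) (hst : s ≠ t) (hsS : s ∈ S) (ht : t ∉ S) :
    maxFlowValue (repCap c S P)
      (Sum.inr (⟨s, hsS⟩, (⟨0, by omega⟩ : Fin P))) (Sum.inl ⟨t, ht⟩) =
    maxFlowValue (twoCopyCap c S P)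
      (Sum.inr (Sum.inl ⟨s, hsS⟩)) (Sum.inl ⟨t, ht⟩) := by
  have hP0 : 0 < P := hP
  unfold maxFlowValue
  congr 1
  ext μ
  simp only [Set.mem_setOf_eq]
  constructor
  · rintro ⟨f, hf, rfl⟩
    obtain ⟨h1, h2⟩ := RepTwoCopyAux.toTwo_spec c S P hP0 s t hsS ht f hf
    exact ⟨_, h1, h2⟩
  · rintro ⟨g, hg, rfl⟩
    obtain ⟨h1, h2⟩ := RepTwoCopyAux.toRep_spec c S P hP0 s t hsS ht g hg
    exact ⟨_, h1, h2⟩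

end
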